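/- Let N ≥ 1 and let A ⊆ ℝ^N be not relatively compact (equivalently, unbounded). Let nBC∞(A) := {f ∈ C^∞(ℝ^N) : f is unbounded on A}. Then for every f ∈ nBC∞(A) there exists a linear subspace V_f of C^∞(ℝ^N) such that: (i) dim(V_f) = 𝔠; (ii) every element of V_f is infinitely differentiable and belongs to L^p(ℝ^N) for every real p ∈ [1, ∞); (iii) f ∉ V_f and every nonzero element of span{f} + V_f is unbounded on A; and (iv) whenever a sequence (H_l)_{l∈ℕ} in span{f} + V_f converges pointwise on ℝ^N to a function h with h ≠ 0, then h is unbounded on A. In particular, nBC∞(A) is maximal pointwise spaceable in C^∞(ℝ^N). -/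

import Mathlib

open MeasureTheory Filter Topology Metric
open scoped ENNReal NNReal

noncomputable section

/-- Euclidean space `ℝ^N`. -/
abbrev RN (N : ℕ) := EuclideanSpace ℝ (Fin N)

/-- The space `X = C^∞(ℝ^N) ∩ ⋂_{p ∈ [1,∞)} L^p(ℝ^N)` of infinitely differentiable
functions that are `p`-integrable for every real `p ≥ 1`. -/
def SmoothIntegrable (N : ℕ) : Set (RN N → ℝ) :=
  {f | ContDiff ℝ (⊤ : ℕ∞) f ∧
       ∀ p : ℝ, 1 ≤ p → MemLp f (ENNReal.ofReal p) volume}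

/-- `f` is unbounded on `A`, i.e. `sup_{x ∈ A} |f x| = +∞`. -/
def UnboundedOn {N : ℕ} (A : Set (RN N)) (f : RN N → ℝ) : Prop :=
  ∀ C : ℝ, ∃ x ∈ A, C < |f x|

/-- `nBC∞I(A) = {f ∈ X : f is unbounded on A}`. -/
def nBCI {N : ℕ} (A : Set (RN N)) : Set (RN N → ℝ) :=
  {f | f ∈ SmoothIntegrable N ∧ UnboundedOn A f}

/-- `nBC∞(A) = {f ∈ C^∞(ℝ^N) : f is unbounded on A}`. -/
def nBC {N : ℕ} (A : Set (RN N)) : Set (RN N → ℝ) :=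
  {f | ContDiff ℝ (⊤ : ℕ∞) f ∧ UnboundedOn A f}


namespace NBCAux


/-- radius for bumps at tree level `n` -/
def rr (n : ℕ) : ℝ := ((8:ℝ) ^ ((n+1)*(n+1)))⁻¹

lemma rr_pos (n : ℕ) : 0 < rr n := by
  unfold rr; positivity

lemma rr_le_one (n : ℕ) : rr n ≤ 1 := by
  unfold rr
  rw [inv_le_one_iff₀]
  right
  exact one_le_pow₀ (by norm_num)

section Defs
variable {N : ℕ} (a : ℕ → RN N)

/-- center point for the node `w` -/
def ctr (w : List Bool) : RN N := a (2 * Encodable.encode w + 2)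

/-- the bump at node `w` -/
def bmp (w : List Bool) : ContDiffBump (ctr a w) :=
  ⟨rr w.length / 2, rr w.length, by have := rr_pos w.length; linarith,
    by have := rr_pos w.length; linarith⟩

/-- the building block: scaled bump at node `w` -/
def Φ (w : List Bool) : RN N → ℝ := fun x => 8 ^ w.length * bmp a w x

/-- first `n` values of branch `σ` -/
def tk (σ : ℕ → Bool) (n : ℕ) : List Bool := List.ofFn (fun i : Fin n => σ i)

/-- the generator attached to a branch `σ` -/
def g (σ : ℕ → Bool) : RN N → ℝ := fun x => ∑' n, Φ a (tk σ n) x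

/-- separation property of the chosen points -/
def Sep (a : ℕ → RN N) : Prop := ∀ i j, i < j → ‖a i‖ + 3 ≤ ‖a j‖

end Defs

lemma tk_length (σ : ℕ → Bool) (n : ℕ) : (tk σ n).length = n := by
  simp [tk]

lemma tk_succ (σ : ℕ → Bool) (n : ℕ) : tk σ (n+1) = tk σ n ++ [σ n] := by
  rw [tk, List.ofFn_succ', List.concat_eq_append]
  simp [tk, Fin.last]

variable {N : ℕ} {a : ℕ → RN N}

lemma Sep.dist_ge (ha : Sep a) {i j : ℕ} (h : i ≠ j) : 3 ≤ dist (a i) (a j) := by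
  wlog hij : i < j generalizing i j
  · rw [dist_comm]; exact this h.symm (by omega)
  have h1 := ha i j hij
  have h2 : |‖a i‖ - ‖a j‖| ≤ ‖a i - a j‖ := abs_norm_sub_norm_le _ _
  rw [dist_eq_norm]
  rw [abs_le] at h2
  linarith [h2.1]

lemma ctr_dist_ge (ha : Sep a) {w w' : List Bool} (h : w ≠ w') :
    3 ≤ dist (ctr a w) (ctr a w') := by
  apply ha.dist_ge
  intro hc
  exact h (Encodable.encode_injective (by omega))

lemma odd_dist_ge (ha : Sep a) (j : ℕ) (w : List Bool) :
    3 ≤ dist (a (2*j+1)) (ctr a w) := by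
  apply ha.dist_ge; omega

lemma Φ_zero_of_far {w : List Bool} {x : RN N} (h : rr w.length < dist x (ctr a w)) :
    Φ a w x = 0 := by
  unfold Φ
  rw [(bmp a w).zero_of_le_dist h.le, mul_zero]

lemma ctr_mem_inner (w : List Bool) : ctr a w ∈ closedBall (ctr a w) (bmp a w).rIn := by
  apply mem_closedBall_self
  have := rr_pos w.length
  show (0:ℝ) ≤ rr w.length / 2
  linarith

lemma Φ_ctr (w : List Bool) : Φ a w (ctr a w) = 8 ^ w.length := by
  unfold Φ
  rw [(bmp a w).one_of_mem_closedBall (ctr_mem_inner w), mul_one]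

lemma Φ_abs_le (w : List Bool) (x : RN N) : |Φ a w x| ≤ 8 ^ w.length := by
  unfold Φ
  rw [abs_mul, abs_of_nonneg (by positivity : (0:ℝ) ≤ (8:ℝ)^w.length)]
  have h1 := (bmp a w).nonneg (x := x)
  have h2 := (bmp a w).le_one (x := x)
  rw [abs_of_nonneg h1]
  nlinarith [pow_pos (by norm_num : (0:ℝ) < 8) w.length]

/-- if `x` is in the (closed) bump ball of node `w`, it is far from all other bump balls -/
lemma far_of_near (ha : Sep a) {w w' : List Bool} (h : w ≠ w') {x : RN N}
    (hx : dist x (ctr a w) ≤ rr w.length) : rr w'.length < dist x (ctr a w') := by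
  have h3 := ctr_dist_ge ha h
  have := dist_triangle (ctr a w) x (ctr a w')
  rw [dist_comm (ctr a w) x] at this
  have r1 := rr_le_one w.length
  have r2 := rr_le_one w'.length
  linarith

/-- value of a generator inside a bump ball -/
lemma g_in_ball (ha : Sep a) {σ : ℕ → Bool} {w : List Bool} {x : RN N}
    (hx : dist x (ctr a w) ≤ rr w.length) :
    g a σ x = if tk σ w.length = w then 8 ^ w.length * bmp a w x else 0 := by
  by_cases hm : tk σ w.length = w
  · rw [if_pos hm]
    unfold g
    rw [tsum_eq_single w.length]
    · rw [hm]; rfl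
    · intro n hn
      apply Φ_zero_of_far
      have hne : tk σ n ≠ w := by
        intro hc
        exact hn (by simpa [tk_length] using congrArg List.length hc)
      simpa [tk_length] using far_of_near ha (fun hc => hne hc.symm) hx
  · rw [if_neg hm]
    unfold g
    have : ∀ n, Φ a (tk σ n) x = 0 := by
      intro n
      apply Φ_zero_of_far
      have hne : tk σ n ≠ w := by
        rcases eq_or_ne n w.length with rfl | hn
        · exact hm
        · intro hc
          exact hn (by simpa [tk_length] using congrArg List.length hc)
      simpa [tk_length] using far_of_near ha (fun hc => hne hc.symm) hx
    simp [this]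

lemma ctr_mem_ball (w : List Bool) : dist (ctr a (N := N) w) (ctr a w) ≤ rr w.length := by
  simp [(rr_pos w.length).le]

/-- value of a generator at a node center -/
lemma g_ctr (ha : Sep a) (σ : ℕ → Bool) (w : List Bool) :
    g a σ (ctr a w) = if tk σ w.length = w then (8:ℝ) ^ w.length else 0 := by
  rw [g_in_ball ha (ctr_mem_ball w)]
  by_cases hm : tk σ w.length = w
  · rw [if_pos hm, if_pos hm, (bmp a w).one_of_mem_closedBall (ctr_mem_inner w), mul_one]
  · rw [if_neg hm, if_neg hm]

/-- value of a generator away from all bump balls -/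
lemma g_out (ha : Sep a) (σ : ℕ → Bool) {x : RN N}
    (hx : ∀ w : List Bool, rr w.length < dist x (ctr a w)) : g a σ x = 0 := by
  unfold g
  have : ∀ n, Φ a (tk σ n) x = 0 := fun n => Φ_zero_of_far (hx _)
  simp [this]

section ChunkC
variable {N : ℕ} {a : ℕ → RN N}

/-- the tree relation between node values -/
def Rel (a : ℕ → RN N) (v : RN N → ℝ) : Prop :=
  ∀ w : List Bool, v (ctr a (w ++ [false])) + v (ctr a (w ++ [true])) = 8 * v (ctr a w)

/-- local structure inside bump balls -/
def Loc (a : ℕ → RN N) (v : RN N → ℝ) : Prop :=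
  ∀ (w : List Bool) (x : RN N), dist x (ctr a w) ≤ rr w.length →
    v x = v (ctr a w) * bmp a w x

/-- vanishing away from the bump balls -/
def Out (a : ℕ → RN N) (v : RN N → ℝ) : Prop :=
  ∀ x : RN N, (∀ w : List Bool, rr w.length < dist x (ctr a w)) → v x = 0

/-- vanishing at odd-indexed points -/
def Odd' (a : ℕ → RN N) (v : RN N → ℝ) : Prop := ∀ j, v (a (2*j+1)) = 0

def Good (a : ℕ → RN N) (v : RN N → ℝ) : Prop :=
  Rel a v ∧ Loc a v ∧ Out a v ∧ Odd' a v

lemma append_length (w : List Bool) (b : Bool) : (w ++ [b]).length = w.length + 1 := by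
  simp

lemma g_rel (ha : Sep a) (σ : ℕ → Bool) : Rel a (g a σ) := by
  intro w
  have hf := g_ctr ha σ (w ++ [false])
  have ht := g_ctr ha σ (w ++ [true])
  have hw := g_ctr ha σ w
  rw [append_length] at hf ht
  rw [tk_succ] at hf ht
  by_cases hm : tk σ w.length = w
  · rw [hm] at hf ht
    rw [if_pos hm] at hw
    cases hσ : σ w.length
    · rw [hσ] at hf ht
      rw [if_pos rfl] at hf
      rw [if_neg (by simp)] at ht
      rw [hf, ht, hw]; ring
    · rw [hσ] at hf ht
      rw [if_neg (by simp)] at hf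
      rw [if_pos rfl] at ht
      rw [hf, ht, hw]; ring
  · have hnf : tk σ w.length ++ [σ w.length] ≠ w ++ [false] := by
      intro hc
      apply hm
      have := congrArg (List.take w.length) hc
      rwa [List.take_left' (tk_length σ w.length), List.take_left' rfl] at this
    have hnt : tk σ w.length ++ [σ w.length] ≠ w ++ [true] := by
      intro hc
      apply hm
      have := congrArg (List.take w.length) hc
      rwa [List.take_left' (tk_length σ w.length), List.take_left' rfl] at this
    rw [if_neg hnf] at hf
    rw [if_neg hnt] at ht
    rw [if_neg hm] at hw
    rw [hf, ht, hw]; ring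

lemma g_loc (ha : Sep a) (σ : ℕ → Bool) : Loc a (g a σ) := by
  intro w x hx
  rw [g_in_ball ha hx, g_ctr ha σ w]
  by_cases hm : tk σ w.length = w
  · rw [if_pos hm, if_pos hm]
  · rw [if_neg hm, if_neg hm, zero_mul]

lemma g_out' (ha : Sep a) (σ : ℕ → Bool) : Out a (g a σ) := fun _ hx => g_out ha σ hx

lemma g_odd (ha : Sep a) (σ : ℕ → Bool) : Odd' a (g a σ) := by
  intro j
  unfold g
  have : ∀ n, Φ a (tk σ n) (a (2*j+1)) = 0 := by
    intro n
    apply Φ_zero_of_far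
    calc rr (tk σ n).length ≤ 1 := rr_le_one _
    _ < 3 := by norm_num
    _ ≤ dist (a (2*j+1)) (ctr a (tk σ n)) := odd_dist_ge ha j _
  simp [this]

lemma g_good (ha : Sep a) (σ : ℕ → Bool) : Good a (g a σ) :=
  ⟨g_rel ha σ, g_loc ha σ, g_out' ha σ, g_odd ha σ⟩

lemma good_zero : Good a (0 : RN N → ℝ) := by
  refine ⟨fun w => by simp, fun w x _ => by simp, fun x _ => rfl, fun j => rfl⟩

lemma good_add {u v : RN N → ℝ} (hu : Good a u) (hv : Good a v) : Good a (u + v) := by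
  refine ⟨fun w => ?_, fun w x hx => ?_, fun x hx => ?_, fun j => ?_⟩
  · have := hu.1 w; have := hv.1 w; simp only [Pi.add_apply]; linarith [hu.1 w, hv.1 w]
  · simp only [Pi.add_apply, hu.2.1 w x hx, hv.2.1 w x hx]; ring
  · simp only [Pi.add_apply, hu.2.2.1 x hx, hv.2.2.1 x hx]; ring
  · simp only [Pi.add_apply, hu.2.2.2 j, hv.2.2.2 j]; ring

lemma good_smul (c : ℝ) {v : RN N → ℝ} (hv : Good a v) : Good a (c • v) := by
  refine ⟨fun w => ?_, fun w x hx => ?_, fun x hx => ?_, fun j => ?_⟩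
  · simp only [Pi.smul_apply, smul_eq_mul]
    linear_combination c * hv.1 w
  · simp only [Pi.smul_apply, smul_eq_mul, hv.2.1 w x hx]; ring
  · simp only [Pi.smul_apply, smul_eq_mul, hv.2.2.1 x hx]; ring
  · simp only [Pi.smul_apply, smul_eq_mul, hv.2.2.2 j]; ring

/-- Goodness passes to pointwise limits. -/
lemma good_limit {v : ℕ → RN N → ℝ} {h : RN N → ℝ} (hv : ∀ l, Good a (v l))
    (hlim : ∀ x, Tendsto (fun l => v l x) atTop (𝓝 (h x))) : Good a h := by
  have key : ∀ x y (c d : ℝ), (∀ l, v l x = c * v l y + d) → h x = c * h y + d := by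
    intro x y c d hrel
    apply tendsto_nhds_unique (hlim x)
    have : Tendsto (fun l => c * v l y + d) atTop (𝓝 (c * h y + d)) :=
      (((hlim y).const_mul c).add_const d)
    refine this.congr (fun l => (hrel l).symm)
  refine ⟨fun w => ?_, fun w x hx => ?_, fun x hx => ?_, fun j => ?_⟩
  · -- Rel : h (w0) = 8 * h w - h (w1) pointwise limit trick ; do it directly
    apply tendsto_nhds_unique (((hlim _).add (hlim _)))
    have : Tendsto (fun l => 8 * v l (ctr a w)) atTop (𝓝 (8 * h (ctr a w))) :=
      (hlim _).const_mul 8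
    exact this.congr (fun l => ((hv l).1 w).symm)
  · have := key x (ctr a w) (bmp a w x) 0 (fun l => by rw [(hv l).2.1 w x hx]; ring)
    rw [this]; ring
  · apply tendsto_nhds_unique (hlim x)
    have : (fun l => v l x) = fun _ => (0:ℝ) := funext (fun l => (hv l).2.2.1 x hx)
    rw [this]; exact tendsto_const_nhds
  · apply tendsto_nhds_unique (hlim _)
    have : (fun l => v l (a (2*j+1))) = fun _ => (0:ℝ) := funext (fun l => (hv l).2.2.2 j)
    rw [this]; exact tendsto_const_nhds

/-- The growth engine: a function satisfying the tree relation with a nonzero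
node value is unbounded on the node centers. -/
lemma unbounded_of_rel {A : Set (RN N)} (haA : ∀ j, a j ∈ A) {v : RN N → ℝ}
    (hR : Rel a v) {w₀ : List Bool} (h0 : v (ctr a w₀) ≠ 0) :
    (∀ C : ℝ, ∃ x ∈ A, C < |v x|) := by
  have grow : ∀ j : ℕ, ∃ w : List Bool, 4^j * |v (ctr a w₀)| ≤ |v (ctr a w)| := by
    intro j
    induction j with
    | zero => exact ⟨w₀, by simp⟩
    | succ j ih =>
      obtain ⟨w, hw⟩ := ih
      have hrel := hR w
      have habs : 8 * |v (ctr a w)| ≤ |v (ctr a (w ++ [false]))| + |v (ctr a (w ++ [true]))| := by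
        have := abs_add_le (v (ctr a (w ++ [false]))) (v (ctr a (w ++ [true])))
        rw [hrel] at this
        rw [abs_mul] at this
        simp only [abs_of_nonneg (by norm_num : (0:ℝ) ≤ 8)] at this
        linarith
      by_cases hc : 4 * |v (ctr a w)| ≤ |v (ctr a (w ++ [false]))|
      · refine ⟨w ++ [false], ?_⟩
        calc 4^(j+1) * |v (ctr a w₀)| = 4 * (4^j * |v (ctr a w₀)|) := by ring
        _ ≤ 4 * |v (ctr a w)| := by linarith
        _ ≤ _ := hc
      · refine ⟨w ++ [true], ?_⟩
        push_neg at hc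
        calc 4^(j+1) * |v (ctr a w₀)| = 4 * (4^j * |v (ctr a w₀)|) := by ring
        _ ≤ 4 * |v (ctr a w)| := by linarith
        _ ≤ _ := by linarith
  intro C
  have hδ : 0 < |v (ctr a w₀)| := abs_pos.mpr h0
  obtain ⟨j, hj⟩ := pow_unbounded_of_one_lt (C / |v (ctr a w₀)|) (by norm_num : (1:ℝ) < 4)
  obtain ⟨w, hw⟩ := grow j
  refine ⟨ctr a w, haA _, ?_⟩
  have : C < 4^j * |v (ctr a w₀)| := by
    rwa [div_lt_iff₀ hδ] at hj
  linarith

end ChunkC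
section ChunkD
variable {N : ℕ} {a : ℕ → RN N}

lemma Φ_contDiff (w : List Bool) : ContDiff ℝ (⊤:ℕ∞) (Φ a w) :=
  contDiff_const.mul (bmp a w).contDiff

lemma tk_ne_of_ne {σ : ℕ → Bool} {m n : ℕ} (h : m ≠ n) : tk σ m ≠ tk σ n := by
  intro hc
  exact h (by simpa [tk_length] using congrArg List.length hc)

lemma g_contDiff (ha : Sep a) (σ : ℕ → Bool) : ContDiff ℝ (⊤:ℕ∞) (g a σ) := by
  rw [contDiff_iff_contDiffAt]
  intro x₀
  by_cases hc : ∃ n, dist x₀ (ctr a (tk σ n)) ≤ 4/3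
  · obtain ⟨n₀, hn₀⟩ := hc
    have key : ∀ y ∈ ball x₀ (1/3:ℝ), g a σ y = Φ a (tk σ n₀) y := by
      intro y hy
      unfold g
      apply tsum_eq_single
      intro n hn
      apply Φ_zero_of_far
      have hctr := ctr_dist_ge ha (tk_ne_of_ne (σ := σ) hn)
      have h1 := dist_triangle (ctr a (tk σ n)) y (ctr a (tk σ n₀))
      have h2 := dist_triangle y x₀ (ctr a (tk σ n₀))
      have hy' : dist y x₀ < 1/3 := mem_ball.mp hy
      have hr := rr_le_one (tk σ n).length
      rw [dist_comm y (ctr a (tk σ n))]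
      linarith
    exact ((Φ_contDiff (tk σ n₀)).contDiffAt).congr_of_eventuallyEq
      (eventuallyEq_of_mem (ball_mem_nhds x₀ (by norm_num)) key)
  · push_neg at hc
    have key : ∀ y ∈ ball x₀ (1/3:ℝ), g a σ y = 0 := by
      intro y hy
      unfold g
      have : ∀ n, Φ a (tk σ n) y = 0 := by
        intro n
        apply Φ_zero_of_far
        have h1 := hc n
        have h2 := dist_triangle x₀ y (ctr a (tk σ n))
        have hy' : dist x₀ y < 1/3 := by rw [dist_comm]; exact mem_ball.mp hy
        have hr := rr_le_one (tk σ n).length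
        linarith
      simp [this]
    exact (contDiffAt_const (c := (0:ℝ))).congr_of_eventuallyEq
      (eventuallyEq_of_mem (ball_mem_nhds x₀ (by norm_num)) key)

lemma g_continuous (ha : Sep a) (σ : ℕ → Bool) : Continuous (g a σ) :=
  (g_contDiff ha σ).continuous

/-- at most one bump contributes at each point -/
lemma exists_single_zero (ha : Sep a) (σ : ℕ → Bool) (x : RN N) :
    ∃ n₀, ∀ n, n ≠ n₀ → Φ a (tk σ n) x = 0 := by
  by_cases hc : ∃ n, dist x (ctr a (tk σ n)) ≤ rr n
  · obtain ⟨n₀, hn₀⟩ := hc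
    refine ⟨n₀, fun n hn => ?_⟩
    apply Φ_zero_of_far
    have hx : dist x (ctr a (tk σ n₀)) ≤ rr (tk σ n₀).length := by rwa [tk_length]
    simpa [tk_length] using far_of_near ha (tk_ne_of_ne (Ne.symm hn)) hx
  · push_neg at hc
    refine ⟨0, fun n _ => ?_⟩
    apply Φ_zero_of_far
    rw [tk_length]
    exact hc n

/-- the crucial real estimate -/
lemma real_bound {p : ℝ} (hN : 1 ≤ N) (hp : 1 ≤ p) (n : ℕ) :
    ((8:ℝ)^n)^p * (rr n)^N ≤ (8:ℝ)^(p*p) * (1/2:ℝ)^n := by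
  have h0 : (0:ℝ) ≤ 8 := by norm_num
  have h1 : (rr n)^N ≤ rr n := by
    have := pow_le_pow_of_le_one (rr_pos n).le (rr_le_one n) hN
    simpa using this
  have h2 : ((8:ℝ)^n)^p = (8:ℝ)^((n:ℝ)*p) := by
    rw [← Real.rpow_natCast 8 n, ← Real.rpow_mul h0]
  have h3 : rr n = (8:ℝ)^(-((n:ℝ)+1)^2) := by
    unfold rr
    rw [← Real.rpow_natCast 8 ((n+1)*(n+1)), ← Real.rpow_neg h0]
    push_cast
    ring_nf
  have h4 : ((8:ℝ)^n)^p * rr n = (8:ℝ)^((n:ℝ)*p - ((n:ℝ)+1)^2) := by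
    rw [h2, h3, ← Real.rpow_add (by norm_num : (0:ℝ) < 8)]
    ring_nf
  have h5 : (8:ℝ)^((n:ℝ)*p - ((n:ℝ)+1)^2) ≤ (8:ℝ)^(p*p - (n:ℝ)) := by
    rw [Real.rpow_le_rpow_left_iff (by norm_num : (1:ℝ) < 8)]
    nlinarith [sq_nonneg ((n:ℝ) - p), sq_nonneg ((n:ℝ)+1)]
  have h6 : (8:ℝ)^(p*p - (n:ℝ)) = (8:ℝ)^(p*p) * ((8:ℝ)⁻¹)^n := by
    rw [Real.rpow_sub (by norm_num : (0:ℝ) < 8), Real.rpow_natCast]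
    rw [div_eq_mul_inv, inv_pow]
  have h7 : ((8:ℝ)⁻¹)^n ≤ (1/2:ℝ)^n := by
    apply pow_le_pow_left₀ (by norm_num) (by norm_num)
  have hpow : (0:ℝ) < ((8:ℝ)^n)^p := by positivity
  have h8 : ((8:ℝ)^n)^p * (rr n)^N ≤ ((8:ℝ)^n)^p * rr n :=
    mul_le_mul_of_nonneg_left h1 hpow.le
  calc ((8:ℝ)^n)^p * (rr n)^N ≤ ((8:ℝ)^n)^p * rr n := h8
  _ = (8:ℝ)^((n:ℝ)*p - ((n:ℝ)+1)^2) := h4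
  _ ≤ (8:ℝ)^(p*p - (n:ℝ)) := h5
  _ = (8:ℝ)^(p*p) * ((8:ℝ)⁻¹)^n := h6
  _ ≤ (8:ℝ)^(p*p) * (1/2:ℝ)^n := by
      apply mul_le_mul_of_nonneg_left h7 (by positivity)

end ChunkD
section ChunkE
variable {N : ℕ} {a : ℕ → RN N}

lemma Φ_nnnorm_bound {p : ℝ} (hp : 1 ≤ p) (w : List Bool) (x : RN N) :
    (‖Φ a w x‖₊ : ℝ≥0∞) ^ p ≤
      (closedBall (ctr a w) (rr w.length)).indicator
        (fun _ => ((8:ℝ≥0∞) ^ w.length) ^ p) x := by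
  by_cases hx : x ∈ closedBall (ctr a w) (rr w.length)
  · rw [Set.indicator_of_mem hx]
    have h1 : (‖Φ a w x‖₊ : ℝ≥0∞) ≤ (8:ℝ≥0∞) ^ w.length := by
      rw [← enorm_eq_nnnorm, Real.enorm_eq_ofReal_abs]
      calc ENNReal.ofReal |Φ a w x| ≤ ENNReal.ofReal ((8:ℝ) ^ w.length) :=
        ENNReal.ofReal_le_ofReal (Φ_abs_le w x)
      _ = (8:ℝ≥0∞) ^ w.length := by
          rw [ENNReal.ofReal_pow (by norm_num : (0:ℝ) ≤ 8)]
          norm_num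
    exact ENNReal.rpow_le_rpow h1 (by linarith)
  · have hfar : rr w.length < dist x (ctr a w) := by
      rw [mem_closedBall] at hx; linarith [not_le.mp hx]
    rw [Φ_zero_of_far hfar]
    simp only [nnnorm_zero, ENNReal.coe_zero]
    rw [ENNReal.zero_rpow_of_pos (by linarith)]
    exact zero_le

lemma Φ_lintegral_bound {p : ℝ} (hp : 1 ≤ p) (w : List Bool) :
    (∫⁻ x, (‖Φ a w x‖₊ : ℝ≥0∞) ^ p) ≤
      ((8:ℝ≥0∞) ^ w.length) ^ p *
        (ENNReal.ofReal (rr w.length ^ N) * volume (ball (0 : RN N) 1)) := by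
  calc (∫⁻ x, (‖Φ a w x‖₊ : ℝ≥0∞) ^ p)
      ≤ ∫⁻ x, (closedBall (ctr a w) (rr w.length)).indicator
          (fun _ => ((8:ℝ≥0∞) ^ w.length) ^ p) x :=
        lintegral_mono (Φ_nnnorm_bound hp w)
  _ = ((8:ℝ≥0∞) ^ w.length) ^ p * volume (closedBall (ctr a w) (rr w.length)) :=
        lintegral_indicator_const measurableSet_closedBall _
  _ = ((8:ℝ≥0∞) ^ w.length) ^ p *
        (ENNReal.ofReal (rr w.length ^ N) * volume (ball (0 : RN N) 1)) := by
      rw [MeasureTheory.Measure.addHaar_closedBall volume _ (rr_pos w.length).le]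
      congr 2
      simp [finrank_euclideanSpace_fin]

lemma g_memLp (ha : Sep a) (hN : 1 ≤ N) (σ : ℕ → Bool) {p : ℝ} (hp : 1 ≤ p) :
    MemLp (g a σ) (ENNReal.ofReal p) volume := by
  have hp0 : (0:ℝ) < p := by linarith
  constructor
  · exact (g_continuous ha σ).aestronglyMeasurable
  · rw [eLpNorm_eq_lintegral_rpow_enorm_toReal (by simpa using hp0) ENNReal.ofReal_ne_top]; simp only [enorm_eq_nnnorm]
    rw [ENNReal.toReal_ofReal hp0.le]
    apply ENNReal.rpow_lt_top_of_nonneg (by positivity)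
    intro hcontra
    have key : (∫⁻ x, (‖g a σ x‖₊ : ℝ≥0∞) ^ p) < ⊤ := by
      have pointwise : ∀ x, (‖g a σ x‖₊ : ℝ≥0∞) ^ p ≤
          ∑' n, (‖Φ a (tk σ n) x‖₊ : ℝ≥0∞) ^ p := by
        intro x
        obtain ⟨n₀, hn₀⟩ := exists_single_zero ha σ x
        have hg : g a σ x = Φ a (tk σ n₀) x := tsum_eq_single n₀ hn₀
        rw [hg]
        exact ENNReal.le_tsum n₀
      have step1 : (∫⁻ x, (‖g a σ x‖₊ : ℝ≥0∞) ^ p) ≤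
          ∑' n, ∫⁻ x, (‖Φ a (tk σ n) x‖₊ : ℝ≥0∞) ^ p := by
        calc (∫⁻ x, (‖g a σ x‖₊ : ℝ≥0∞) ^ p)
            ≤ ∫⁻ x, ∑' n, (‖Φ a (tk σ n) x‖₊ : ℝ≥0∞) ^ p := lintegral_mono pointwise
        _ = ∑' n, ∫⁻ x, (‖Φ a (tk σ n) x‖₊ : ℝ≥0∞) ^ p := by
            apply lintegral_tsum
            intro n
            exact (((Φ_contDiff (tk σ n)).continuous.measurable.nnnorm.coe_nnreal_ennreal).pow_const p).aemeasurable
      have step2 : (∑' n, ∫⁻ x, (‖Φ a (tk σ n) x‖₊ : ℝ≥0∞) ^ p) ≤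
          ∑' n : ℕ, ENNReal.ofReal ((8:ℝ)^(p*p) * (1/2:ℝ)^n) * volume (ball (0 : RN N) 1) := by
        apply ENNReal.tsum_le_tsum
        intro n
        calc (∫⁻ x, (‖Φ a (tk σ n) x‖₊ : ℝ≥0∞) ^ p)
            ≤ ((8:ℝ≥0∞) ^ (tk σ n).length) ^ p *
              (ENNReal.ofReal (rr (tk σ n).length ^ N) * volume (ball (0 : RN N) 1)) :=
            Φ_lintegral_bound hp _
        _ = ENNReal.ofReal (((8:ℝ)^n)^p * (rr n)^N) * volume (ball (0 : RN N) 1) := by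
            rw [tk_length]
            rw [← mul_assoc]
            congr 1
            rw [ENNReal.ofReal_mul (by positivity)]
            congr 1
            rw [← ENNReal.ofReal_rpow_of_pos (by positivity)]
            congr 1
            rw [ENNReal.ofReal_pow (by norm_num : (0:ℝ) ≤ 8)]
            norm_num
        _ ≤ ENNReal.ofReal ((8:ℝ)^(p*p) * (1/2:ℝ)^n) * volume (ball (0 : RN N) 1) := by
            apply mul_le_mul_left
            exact ENNReal.ofReal_le_ofReal (real_bound hN hp n)
      have step3 : (∑' n : ℕ, ENNReal.ofReal ((8:ℝ)^(p*p) * (1/2:ℝ)^n) * volume (ball (0 : RN N) 1)) < ⊤ := by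
        have : ∀ n : ℕ, ENNReal.ofReal ((8:ℝ)^(p*p) * (1/2:ℝ)^n) * volume (ball (0 : RN N) 1)
            = (ENNReal.ofReal ((8:ℝ)^(p*p)) * volume (ball (0 : RN N) 1)) * (ENNReal.ofReal (1/2))^n := by
          intro n
          rw [ENNReal.ofReal_mul (by positivity), ENNReal.ofReal_pow (by norm_num)]
          ring
        rw [tsum_congr this, ENNReal.tsum_mul_left, ENNReal.tsum_geometric]
        apply ENNReal.mul_lt_top
        · exact ENNReal.mul_lt_top ENNReal.ofReal_lt_top measure_ball_lt_top
        · rw [lt_top_iff_ne_top]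
          apply ENNReal.inv_ne_top.mpr
          intro hzero
          rw [tsub_eq_zero_iff_le] at hzero
          have : ENNReal.ofReal (1/2) < 1 := by
            rw [← ENNReal.ofReal_one]
            exact (ENNReal.ofReal_lt_ofReal_iff_of_nonneg (by norm_num)).mpr (by norm_num)
          exact absurd hzero (not_le.mpr this)
      exact lt_of_le_of_lt (le_trans step1 step2) step3
    rw [hcontra] at key
    exact absurd key (lt_irrefl ⊤)

end ChunkE
section ChunkF
variable {N : ℕ} {a : ℕ → RN N}

lemma tk_eq_imp {σ τ : ℕ → Bool} {n : ℕ} (h : tk σ n = tk τ n) :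
    ∀ i < n, σ i = τ i := by
  intro i hi
  have := List.ofFn_injective h
  exact congrFun this ⟨i, hi⟩

lemma lin_indep (ha : Sep a) : LinearIndependent ℝ (g a) := by
  rw [linearIndependent_iff'']
  intro s c hc0 hsum σ
  by_cases hσ : σ ∈ s
  · classical
    set D : (ℕ → Bool) → ℕ := fun τ =>
      if h : ∃ k, τ k ≠ σ k then Nat.find h + 1 else 0 with hD
    set n := s.sup D with hn
    have hne : ∀ τ ∈ s, τ ≠ σ → tk τ n ≠ tk σ n := by
      intro τ hτ hτσ hc
      have hex : ∃ k, τ k ≠ σ k := by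
        by_contra hcon
        push_neg at hcon
        exact hτσ (funext hcon)
      have hk : Nat.find hex < n := by
        have : D τ = Nat.find hex + 1 := by rw [hD]; simp [hex]
        have hle : D τ ≤ n := Finset.le_sup hτ
        omega
      exact Nat.find_spec hex (tk_eq_imp hc _ hk)
    have heval := congrFun hsum (ctr a (tk σ n))
    rw [Finset.sum_apply] at heval
    have hsingle : ∀ τ ∈ s, τ ≠ σ → (c τ • g a τ) (ctr a (tk σ n)) = 0 := by
      intro τ hτ hτσ
      have := g_ctr ha τ (tk σ n)
      rw [tk_length] at this
      rw [Pi.smul_apply, this, if_neg (hne τ hτ hτσ), smul_zero]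
    have hself : (c σ • g a σ) (ctr a (tk σ n)) = c σ * 8 ^ n := by
      have := g_ctr ha σ (tk σ n)
      rw [tk_length] at this
      rw [Pi.smul_apply, this, if_pos rfl, smul_eq_mul]
    rw [Finset.sum_eq_single σ hsingle (fun h => absurd hσ h)] at heval
    rw [hself] at heval
    simp only [Pi.zero_apply] at heval
    have h8 : (8:ℝ)^n ≠ 0 := by positivity
    exact (mul_eq_zero.mp heval).resolve_right h8
  · exact hc0 σ hσ

/-- extraction of a nonzero node value -/
lemma node_of_ne_zero {v : RN N → ℝ} (hLoc : Loc a v) (hOut : Out a v)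
    {x₀ : RN N} (hx : v x₀ ≠ 0) : ∃ w : List Bool, v (ctr a w) ≠ 0 := by
  have hnear : ∃ w : List Bool, dist x₀ (ctr a w) ≤ rr w.length := by
    by_contra hcon
    push_neg at hcon
    exact hx (hOut x₀ hcon)
  obtain ⟨w, hw⟩ := hnear
  refine ⟨w, fun h0 => hx ?_⟩
  rw [hLoc w x₀ hw, h0, zero_mul]

/-- unboundedness in the `f` direction -/
lemma unbounded_f_dir {A : Set (RN N)} {f : RN N → ℝ} (haA : ∀ j, a j ∈ A)
    (haf : ∀ j : ℕ, (j:ℝ) < |f (a j)|) {c : ℝ} (hc : c ≠ 0) {G : RN N → ℝ}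
    (hG : ∀ j, G (a (2*j+1)) = c * f (a (2*j+1))) :
    ∀ C : ℝ, ∃ x ∈ A, C < |G x| := by
  intro C
  set j := Nat.ceil (|C| / |c|) with hj
  refine ⟨a (2*j+1), haA _, ?_⟩
  have hcpos : 0 < |c| := abs_pos.mpr hc
  have h1 : |C| / |c| ≤ (j:ℝ) := Nat.le_ceil _
  have h2 : ((2*j+1 : ℕ):ℝ) < |f (a (2*j+1))| := haf (2*j+1)
  have h3 : (j:ℝ) ≤ ((2*j+1:ℕ):ℝ) := by push_cast; linarith [Nat.cast_nonneg (α := ℝ) j]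
  have h4 : |C| ≤ |c| * ((2*j+1:ℕ):ℝ) := by
    rw [div_le_iff₀ hcpos] at h1
    calc |C| ≤ (j:ℝ) * |c| := h1
    _ ≤ ((2*j+1:ℕ):ℝ) * |c| := by nlinarith
    _ = |c| * ((2*j+1:ℕ):ℝ) := by ring
  rw [hG j, abs_mul]
  calc C ≤ |C| := le_abs_self C
  _ ≤ |c| * ((2*j+1:ℕ):ℝ) := h4
  _ < |c| * |f (a (2*j+1))| := by
      apply mul_lt_mul_of_pos_left _ hcpos
      exact h2

/-- construction of the point sequence -/
lemma exists_pts {A : Set (RN N)} {f : RN N → ℝ} (hf : ContDiff ℝ (⊤:ℕ∞) f)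
    (hu : ∀ C : ℝ, ∃ x ∈ A, C < |f x|) :
    ∃ a : ℕ → RN N, (∀ j, a j ∈ A) ∧ (∀ j : ℕ, (j:ℝ) < |f (a j)|) ∧ Sep a := by
  have key : ∀ R C : ℝ, ∃ x, x ∈ A ∧ C < |f x| ∧ R < ‖x‖ := by
    intro R C
    obtain ⟨M, hM⟩ := (isCompact_closedBall (0:RN N) R).exists_bound_of_continuousOn
      (hf.continuous.continuousOn)
    obtain ⟨x, hxA, hx⟩ := hu (max C M)
    refine ⟨x, hxA, lt_of_le_of_lt (le_max_left _ _) hx, ?_⟩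
    by_contra hR
    push_neg at hR
    have : x ∈ closedBall (0:RN N) R := by rwa [mem_closedBall_zero_iff]
    have := hM x this
    rw [Real.norm_eq_abs] at this
    have := lt_of_le_of_lt (le_max_right C M) hx
    linarith
  choose F hFA hFf hFn using key
  set b : ℕ → RN N := fun j => Nat.rec (F 0 0) (fun n prev => F (‖prev‖ + 3) (n+1)) j with hb
  have hb0 : b 0 = F 0 0 := rfl
  have hbs : ∀ j, b (j+1) = F (‖b j‖ + 3) (j+1) := fun j => rfl
  have hmem : ∀ j, b j ∈ A := by
    intro j
    cases j with
    | zero => rw [hb0]; exact hFA 0 0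
    | succ n => rw [hbs n]; exact hFA _ _
  have hval : ∀ j : ℕ, (j:ℝ) < |f (b j)| := by
    intro j
    cases j with
    | zero => rw [hb0]; exact_mod_cast hFf 0 0
    | succ n => rw [hbs n]; exact_mod_cast hFf _ _
  have hstep : ∀ j, ‖b j‖ + 3 < ‖b (j+1)‖ := by
    intro j
    rw [hbs j]
    exact hFn _ _
  refine ⟨b, hmem, hval, ?_⟩
  intro i j hij
  induction j, hij using Nat.le_induction with
  | base => exact (hstep i).le
  | succ j hij ih =>
    have := hstep j
    have hnn : (0:ℝ) ≤ 3 := by norm_num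
    linarith

end ChunkF
end NBCAux


open NBCAux

/-- `nBC∞(A)` is maximal pointwise spaceable in `C^∞(ℝ^N)`: for every
`f ∈ nBC∞(A)` there is a `𝔠`-dimensional subspace `V_f` of smooth, everywhere
`p`-integrable functions with `f ∉ V_f`, every nonzero element of `span{f} + V_f`
unbounded on `A`, and every nonzero pointwise limit of a sequence in `span{f} + V_f`
unbounded on `A`. -/
theorem nBC_maximal_pointwise_spaceable (N : ℕ) (hN : 1 ≤ N)
    (A : Set (RN N)) (hA : ¬ Bornology.IsBounded A) :
    ∀ f ∈ nBC A, ∃ V : Submodule ℝ (RN N → ℝ),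
      Module.rank ℝ V = Cardinal.continuum ∧
      (V : Set (RN N → ℝ)) ⊆ SmoothIntegrable N ∧
      f ∉ V ∧
      (∀ g ∈ Submodule.span ℝ {f} ⊔ V, g ≠ 0 → UnboundedOn A g) ∧
      (∀ H : ℕ → (RN N → ℝ), (∀ l : ℕ, H l ∈ Submodule.span ℝ {f} ⊔ V) →
        ∀ h : RN N → ℝ, (∀ x : RN N, Tendsto (fun l => H l x) atTop (𝓝 (h x))) →
          h ≠ 0 → UnboundedOn A h) := by
  intro f hf
  obtain ⟨hfs, hfu⟩ := hf
  obtain ⟨a, haA, haf, hsep⟩ := exists_pts hfs hfu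
  classical
  have hgood : ∀ v ∈ Submodule.span ℝ (Set.range (g a)), Good a v := by
    intro v hv
    induction hv using Submodule.span_induction with
    | mem x h =>
      obtain ⟨σ, rfl⟩ := h
      exact g_good hsep σ
    | zero => exact good_zero
    | add x y hx hy ihx ihy => exact good_add ihx ihy
    | smul c x hx ih => exact good_smul c ih
  refine ⟨Submodule.span ℝ (Set.range (g a)), ?_, ?_, ?_, ?_, ?_⟩
  · -- rank
    rw [rank_span (lin_indep hsep)]
    rw [Cardinal.mk_range_eq _ (lin_indep hsep).injective]
    rw [Cardinal.mk_arrow]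
    simp only [Cardinal.mk_bool, Cardinal.mk_nat, Cardinal.lift_id, Cardinal.lift_ofNat,
      Cardinal.lift_aleph0]
    exact Cardinal.two_power_aleph0
  · -- contained in SmoothIntegrable
    intro v hv
    induction hv using Submodule.span_induction with
    | mem x h =>
      obtain ⟨σ, rfl⟩ := h
      exact ⟨g_contDiff hsep σ, fun p hp => g_memLp hsep hN σ hp⟩
    | zero =>
      exact ⟨by exact contDiff_const (c := (0:ℝ)), fun p hp => MemLp.zero⟩
    | add x y hx hy ihx ihy =>
      exact ⟨ihx.1.add ihy.1, fun p hp => (ihx.2 p hp).add (ihy.2 p hp)⟩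
    | smul c x hx ih =>
      exact ⟨ih.1.const_smul c, fun p hp => (ih.2 p hp).const_smul c⟩
  · -- f not in V
    intro hfV
    have h1 := (hgood f hfV).2.2.2 0
    have h2 := haf 1
    rw [show 2*0+1 = 1 from rfl] at h1
    rw [h1] at h2
    norm_num at h2
  · -- nonzero elements of span{f} ⊔ V are unbounded on A
    intro G hG hGne
    rw [Submodule.mem_sup] at hG
    obtain ⟨y, hy, z, hz, hyz⟩ := hG
    rw [Submodule.mem_span_singleton] at hy
    obtain ⟨cG, rfl⟩ := hy
    have hzg := hgood z hz
    by_cases hc : cG = 0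
    · have hGz : G = z := by rw [← hyz, hc, zero_smul, zero_add]
      rw [hGz] at hGne ⊢
      obtain ⟨x₀, hx₀⟩ : ∃ x, z x ≠ 0 := by
        by_contra hcon
        push_neg at hcon
        exact hGne (funext fun x => by simpa using hcon x)
      obtain ⟨w, hw⟩ := node_of_ne_zero hzg.2.1 hzg.2.2.1 hx₀
      exact unbounded_of_rel haA hzg.1 hw
    · have hGpt : ∀ j : ℕ, G (a (2*j+1)) = cG * f (a (2*j+1)) := by
        intro j
        have hcg := congrFun hyz (a (2*j+1))
        rw [Pi.add_apply, Pi.smul_apply, smul_eq_mul, hzg.2.2.2 j] at hcg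
        linarith
      exact unbounded_f_dir haA haf hc hGpt
  · -- pointwise limits
    intro H hH h hlim hne
    have hdec : ∀ l, ∃ c : ℝ, ∃ z ∈ Submodule.span ℝ (Set.range (g a)), c • f + z = H l := by
      intro l
      have hHl := hH l
      rw [Submodule.mem_sup] at hHl
      obtain ⟨y, hy, z, hz, hyz⟩ := hHl
      rw [Submodule.mem_span_singleton] at hy
      obtain ⟨c, rfl⟩ := hy
      exact ⟨c, z, hz, hyz⟩
    choose c z hzV hsum using hdec
    have hgz : ∀ l, Good a (z l) := fun l => hgood _ (hzV l)
    have hf1 : f (a 1) ≠ 0 := by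
      have h2 := haf 1
      intro h0
      rw [h0] at h2
      norm_num at h2
    have hHa1 : ∀ l, H l (a 1) = c l * f (a 1) := by
      intro l
      have hcg := congrFun (hsum l) (a 1)
      have hz1 : z l (a 1) = 0 := by
        have := (hgz l).2.2.2 0
        simpa using this
      rw [Pi.add_apply, Pi.smul_apply, smul_eq_mul, hz1] at hcg
      linarith
    have hctend : Tendsto c atTop (𝓝 (h (a 1) / f (a 1))) := by
      have h1 : Tendsto (fun l => H l (a 1) / f (a 1)) atTop (𝓝 (h (a 1) / f (a 1))) :=
        (hlim (a 1)).div_const _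
      apply h1.congr
      intro l
      rw [hHa1 l]
      field_simp
    set cinf := h (a 1) / f (a 1) with hcinf
    by_cases hc0 : cinf = 0
    · have hzlim : ∀ x, Tendsto (fun l => z l x) atTop (𝓝 (h x)) := by
        intro x
        have h2 : Tendsto (fun l => H l x - c l * f x) atTop (𝓝 (h x - cinf * f x)) :=
          (hlim x).sub (hctend.mul_const (f x))
        rw [hc0, zero_mul, sub_zero] at h2
        apply h2.congr
        intro l
        have hcg := congrFun (hsum l) x
        simp only [Pi.add_apply, Pi.smul_apply, smul_eq_mul] at hcg
        linarith
      have hgh : Good a h := good_limit hgz hzlim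
      obtain ⟨x₀, hx₀⟩ : ∃ x, h x ≠ 0 := by
        by_contra hcon
        push_neg at hcon
        exact hne (funext fun x => by simpa using hcon x)
      obtain ⟨w, hw⟩ := node_of_ne_zero hgh.2.1 hgh.2.2.1 hx₀
      exact unbounded_of_rel haA hgh.1 hw
    · have hodd : ∀ j : ℕ, h (a (2*j+1)) = cinf * f (a (2*j+1)) := by
        intro j
        apply tendsto_nhds_unique (hlim (a (2*j+1)))
        have h2 : Tendsto (fun l => c l * f (a (2*j+1)))  atTop
            (𝓝 (cinf * f (a (2*j+1)))) := hctend.mul_const _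
        apply h2.congr
        intro l
        have hcg := congrFun (hsum l) (a (2*j+1))
        have hzj : z l (a (2*j+1)) = 0 := (hgz l).2.2.2 j
        rw [Pi.add_apply, Pi.smul_apply, smul_eq_mul, hzj, add_zero] at hcg
        exact hcg
      exact unbounded_f_dir haA haf hc0 hodd
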